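/- Let K > 0. There are constants A > 0 and n₀ ≥ 2 depending only on K such that the following holds for all integers n ≥ n₀ and N with 2 ≤ N and N⁶ ≤ n. Let φ_{ab} ∈ [0,π] (1 ≤ a < b ≤ N) be angles, define unit vectors u₁,…,u_N ∈ ℝ^n by (u_i)_k = cos(φ_{ki})·∏_{m=1}^{k−1} sin(φ_{mi}) for 1 ≤ k ≤ i−1, (u_i)_i = ∏_{m=1}^{i−1} sin(φ_{mi}), and (u_i)_k = 0 for k > i, and set α̃_{ij} = √n·(arccos(u_i·u_j) − π/2) for 1 ≤ i < j ≤ N. If |α̃_{ij}| ≤ K for all 1 ≤ i < j ≤ N, then there exists a real number h with |h| ≤ A·N³/√n such that ∏_{1≤i<j≤N} sin(φ_{ij})^{n−N−1}·cos(α̃_{ij}/√n) = (1 + h) · ∏_{1≤i<j≤N} e^{−α̃_{ij}²/2}. -/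

import Mathlib

open Real Finset


lemma aux_exp_sub_one (x : ℝ) : |Real.exp x - 1| ≤ |x| * Real.exp |x| := by
  rcases le_or_gt 0 x with hx | hx
  · rw [abs_of_nonneg hx, abs_of_nonneg (by linarith [Real.one_le_exp hx] : (0:ℝ) ≤ Real.exp x - 1)]
    have h1 : (1 - x) * Real.exp x ≤ Real.exp (-x) * Real.exp x :=
      mul_le_mul_of_nonneg_right (by linarith [Real.add_one_le_exp (-x)]) (le_of_lt (Real.exp_pos x))
    have h2 : Real.exp (-x) * Real.exp x = 1 := by rw [← Real.exp_add]; simp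
    nlinarith
  · rw [abs_of_neg hx, abs_of_nonpos (by nlinarith [Real.exp_lt_one_iff.mpr hx] : Real.exp x - 1 ≤ 0)]
    nlinarith [Real.add_one_le_exp x, Real.one_le_exp (le_of_lt (neg_pos.mpr hx))]

lemma aux_log_ge {y : ℝ} (hy : 0 < y) : 1 - 1/y ≤ Real.log y := by
  have h := Real.log_le_sub_one_of_pos (show 0 < y⁻¹ by positivity)
  rw [Real.log_inv] at h
  have h2 : y⁻¹ = 1/y := by ring
  rw [h2] at h
  linarith

lemma aux_log_close {x : ℝ} (h0 : 0 ≤ x) (h2 : x ≤ 1/2) : |Real.log (1-x) + x| ≤ 2*x^2 := by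
  have hy : 0 < 1 - x := by linarith
  have hub := Real.log_le_sub_one_of_pos hy
  have hlb := aux_log_ge hy
  rw [abs_le]
  constructor
  · have key : 1 - 1/(1-x) = -(x/(1-x)) := by field_simp; ring
    rw [key] at hlb
    have hx : x/(1-x) ≤ x + 2*x^2 := by
      rw [div_le_iff₀ hy]; nlinarith
    nlinarith
  · nlinarith

lemma aux_log_cos {t : ℝ} (h : t^2 ≤ 1) : |Real.log (Real.cos t)| ≤ t^2 := by
  have h1 : 1 - t^2/2 ≤ Real.cos t := Real.one_sub_sq_div_two_le_cos
  have hcpos : 0 < Real.cos t := by linarith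
  have hub : Real.log (Real.cos t) ≤ 0 := Real.log_nonpos (by linarith) (Real.cos_le_one t)
  have hlb := aux_log_ge hcpos
  have h5 : 1/Real.cos t - 1 ≤ t^2 := by
    rw [div_sub_one (ne_of_gt hcpos), div_le_iff₀ hcpos]; nlinarith
  rw [abs_le]
  exact ⟨by linarith, by nlinarith⟩

lemma aux_sin_approx {t : ℝ} (h : |t| ≤ 1) : |Real.sin t - t| ≤ t^2 := by
  have hb := Real.sin_bound h
  have h3 : |t|^3 ≤ |t|^2 := pow_le_pow_of_le_one (abs_nonneg t) h (by norm_num)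
  have h4 : |t|^4 ≤ |t|^2 := pow_le_pow_of_le_one (abs_nonneg t) h (by norm_num)
  have h2 : |t|^2 = t^2 := sq_abs t
  have habs3 : |t^3/6| = |t|^3/6 := by rw [abs_div, abs_pow]; norm_num
  have key : |Real.sin t - t| ≤ |Real.sin t - (t - t^3/6)| + |t^3/6| := by
    have he : Real.sin t - t = (Real.sin t - (t - t^3/6)) + (-(t^3/6)) := by ring
    rw [he]
    exact (abs_add_le _ _).trans (by rw [abs_neg])
  nlinarith [abs_nonneg t]

lemma aux_prod_lb (s : Finset ℕ) (f : ℕ → ℝ) (h0 : ∀ m ∈ s, 0 ≤ f m) (h1 : ∀ m ∈ s, f m ≤ 1) :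
    1 - ∑ m ∈ s, (1 - f m) ≤ ∏ m ∈ s, f m := by
  induction s using Finset.cons_induction with
  | empty => simp
  | cons a s ha IH =>
    rw [Finset.prod_cons, Finset.sum_cons]
    have hfa0 := h0 a (Finset.mem_cons_self a s)
    have hfa1 := h1 a (Finset.mem_cons_self a s)
    have hIH := IH (fun m hm => h0 m (Finset.mem_cons_of_mem hm)) (fun m hm => h1 m (Finset.mem_cons_of_mem hm))
    have hP0 : 0 ≤ ∏ m ∈ s, f m := Finset.prod_nonneg (fun m hm => h0 m (Finset.mem_cons_of_mem hm))
    have hP1 : ∏ m ∈ s, f m ≤ 1 := Finset.prod_le_one (fun m hm => h0 m (Finset.mem_cons_of_mem hm)) (fun m hm => h1 m (Finset.mem_cons_of_mem hm))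
    have hs0 : 0 ≤ ∑ m ∈ s, (1 - f m) :=
      Finset.sum_nonneg (fun m hm => by linarith [h1 m (Finset.mem_cons_of_mem hm)])
    nlinarith

lemma aux_tele (ψ : ℕ → ℝ) (r : ℕ) :
    (∑ k ∈ Finset.range r, Real.cos (ψ (k+1)) ^ 2 * ∏ m ∈ Finset.Icc 1 k, Real.sin (ψ m) ^ 2)
      + ∏ m ∈ Finset.Icc 1 r, Real.sin (ψ m) ^ 2 = 1 := by
  induction r with
  | zero => simp
  | succ r IH =>
    rw [Finset.sum_range_succ, Finset.prod_Icc_succ_top (Nat.le_add_left 1 r)]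
    have hpy := Real.sin_sq_add_cos_sq (ψ (r+1))
    have hg : Real.cos (ψ (r+1))^2 * (∏ m ∈ Finset.Icc 1 r, Real.sin (ψ m)^2)
        + (∏ m ∈ Finset.Icc 1 r, Real.sin (ψ m)^2) * Real.sin (ψ (r+1))^2
        = ∏ m ∈ Finset.Icc 1 r, Real.sin (ψ m)^2 := by
      linear_combination (∏ m ∈ Finset.Icc 1 r, Real.sin (ψ m)^2) * hpy
    linarith

/-- The i-th point of the sphere S^{n-1} ⊂ ℝⁿ in spherical coordinates:
u_i = (cos φ_{1i}, sin φ_{1i} cos φ_{2i}, …, sin φ_{1i}⋯sin φ_{i-1,i}, 0, …, 0).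
Coordinates are 0-indexed: the k-th coordinate (k : Fin n) corresponds to index k+1. -/
noncomputable def sphVec (n : ℕ) (φ : ℕ → ℕ → ℝ) (i : ℕ) : Fin n → ℝ := fun k =>
  if (k : ℕ) + 1 < i then
    Real.cos (φ ((k : ℕ) + 1) i) * ∏ m ∈ Finset.Icc 1 (k : ℕ), Real.sin (φ m i)
  else if (k : ℕ) + 1 = i then
    ∏ m ∈ Finset.Icc 1 (k : ℕ), Real.sin (φ m i)
  else 0

noncomputable def auxW (φ : ℕ → ℕ → ℝ) (i k : ℕ) : ℝ :=
  if k + 1 < i then Real.cos (φ (k+1) i) * ∏ m ∈ Finset.Icc 1 k, Real.sin (φ m i)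
  else if k + 1 = i then ∏ m ∈ Finset.Icc 1 k, Real.sin (φ m i) else 0

lemma auxW_zero {φ : ℕ → ℕ → ℝ} {i k : ℕ} (h : i ≤ k) : auxW φ i k = 0 := by
  unfold auxW
  rw [if_neg (by omega), if_neg (by omega)]

lemma ip_sph (n i j : ℕ) (hin : i ≤ n) (φ : ℕ → ℕ → ℝ) :
    ∑ k : Fin n, sphVec n φ i k * sphVec n φ j k
      = ∑ k ∈ Finset.range i, auxW φ i k * auxW φ j k := by
  have h1 : ∑ k : Fin n, sphVec n φ i k * sphVec n φ j k
      = ∑ k ∈ Finset.range n, auxW φ i k * auxW φ j k := by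
    rw [← Fin.sum_univ_eq_sum_range (fun k => auxW φ i k * auxW φ j k) n]
    rfl
  rw [h1]
  symm
  apply Finset.sum_subset (Finset.range_subset_range.mpr hin)
  intro k _ hk
  rw [auxW_zero (by simp at hk ⊢; omega), zero_mul]

lemma ip_eq (n : ℕ) (φ : ℕ → ℕ → ℝ) {i j : ℕ} (hi : 1 ≤ i) (hij : i < j) (hin : i ≤ n) :
    ∑ k : Fin n, sphVec n φ i k * sphVec n φ j k =
      (∑ k ∈ Finset.range (i-1), Real.cos (φ (k+1) i) * Real.cos (φ (k+1) j) *
        ∏ m ∈ Finset.Icc 1 k, (Real.sin (φ m i) * Real.sin (φ m j)))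
      + Real.cos (φ i j) * ∏ m ∈ Finset.Icc 1 (i-1), (Real.sin (φ m i) * Real.sin (φ m j)) := by
  obtain ⟨i', rfl⟩ : ∃ i', i = i' + 1 := ⟨i - 1, by omega⟩
  rw [ip_sph n (i'+1) j hin φ, Finset.sum_range_succ]
  simp only [Nat.add_sub_cancel]
  congr 1
  · apply Finset.sum_congr rfl
    intro k hk
    have hk' : k < i' := Finset.mem_range.mp hk
    unfold auxW
    rw [if_pos (by omega), if_pos (by omega), Finset.prod_mul_distrib]
    ring
  · unfold auxW
    rw [if_neg (by omega), if_pos rfl, if_pos (by omega), Finset.prod_mul_distrib]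
    ring

lemma ip_self (n i : ℕ) (hi : 1 ≤ i) (hin : i ≤ n) (φ : ℕ → ℕ → ℝ) :
    ∑ k : Fin n, sphVec n φ i k * sphVec n φ i k = 1 := by
  obtain ⟨i', rfl⟩ : ∃ i'', i = i'' + 1 := ⟨i - 1, by omega⟩
  rw [ip_sph n (i'+1) (i'+1) hin φ, Finset.sum_range_succ]
  have h1 : ∀ k ∈ Finset.range i', auxW φ (i'+1) k * auxW φ (i'+1) k
      = Real.cos (φ (k+1) (i'+1)) ^ 2 * ∏ m ∈ Finset.Icc 1 k, Real.sin (φ m (i'+1)) ^ 2 := by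
    intro k hk
    have hk' : k < i' := Finset.mem_range.mp hk
    unfold auxW
    rw [if_pos (by omega), Finset.prod_pow]
    ring
  rw [Finset.sum_congr rfl h1]
  have h2 : auxW φ (i'+1) i' * auxW φ (i'+1) i' = ∏ m ∈ Finset.Icc 1 i', Real.sin (φ m (i'+1)) ^ 2 := by
    unfold auxW
    rw [if_neg (by omega), if_pos rfl, Finset.prod_pow]
    ring
  rw [h2]
  exact aux_tele (fun m => φ m (i'+1)) i'


lemma aux_pairBound {c t s mR nR NR sq C K D B : ℝ}
    (hn0 : 0 < nR) (hsq : sq^2 = nR) (hsq0 : 0 < sq) (hsn : sq ≤ nR)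
    (hs2 : s^2 = 1 - c^2) (hs0 : 0 < s)
    (hc : |c| ≤ C/sq) (hc2' : c^2 ≤ 1/2)
    (ht : |t| ≤ K/sq) (ht2' : t^2 ≤ 1)
    (hct : |c + t| ≤ D*NR/nR)
    (hmn : mR = nR - NR - 1) (hm0 : 0 ≤ mR)
    (hN1 : 1 ≤ NR)
    (hC0 : 0 < C) (hK0 : 0 < K) (hD0 : 0 < D)
    (hB : (C+K)*D + C^2 + C^4 + K^2 + 1 ≤ B) :
    |mR * Real.log s + Real.log (Real.cos t) + (nR*t^2)/2| ≤ B*NR/sq := by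
  have hcsq : c^2 ≤ C^2/nR := by
    calc c^2 = |c|^2 := (sq_abs c).symm
    _ ≤ (C/sq)^2 := pow_le_pow_left₀ (abs_nonneg c) hc 2
    _ = C^2/nR := by rw [div_pow, hsq]
  have ht2 : t^2 ≤ K^2/nR := by
    calc t^2 = |t|^2 := (sq_abs t).symm
    _ ≤ (K/sq)^2 := pow_le_pow_left₀ (abs_nonneg t) ht 2
    _ = K^2/nR := by rw [div_pow, hsq]
  have hlogsq : Real.log (1 - c^2) = 2 * Real.log s := by
    rw [← hs2, Real.log_pow]
    norm_num
  have hlog1 : |Real.log s + c^2/2| ≤ c^2*c^2 := by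
    have h := aux_log_close (sq_nonneg c) hc2'
    rw [hlogsq] at h
    have e : Real.log s + c^2/2 = (2*Real.log s + c^2)/2 := by ring
    rw [e, abs_div, abs_of_pos (by norm_num : (0:ℝ) < 2)]
    rw [div_le_iff₀ (by norm_num : (0:ℝ) < 2)]
    calc |2*Real.log s + c^2| ≤ 2*(c^2)^2 := h
    _ = c^2*c^2*2 := by ring
  have hlog2 : |Real.log (Real.cos t)| ≤ t^2 := aux_log_cos ht2'
  have hmle : mR ≤ nR := by rw [hmn]; linarith
  have hdec : mR * Real.log s + Real.log (Real.cos t) + (nR*t^2)/2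
      = mR*(Real.log s + c^2/2) + Real.log (Real.cos t)
        + nR*(t^2 - c^2)/2 + (NR+1)*c^2/2 := by
    rw [hmn]; ring
  have hb1 : |mR*(Real.log s + c^2/2)| ≤ C^4/nR := by
    rw [abs_mul, abs_of_nonneg hm0]
    calc mR * |Real.log s + c^2/2| ≤ nR * (c^2*c^2) :=
          mul_le_mul hmle hlog1 (abs_nonneg _) hn0.le
    _ ≤ nR * ((C^2/nR)*(C^2/nR)) := by
        apply mul_le_mul_of_nonneg_left _ hn0.le
        exact mul_le_mul hcsq hcsq (sq_nonneg c) (by positivity)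
    _ = C^4/nR := by field_simp
  have hb2 : |Real.log (Real.cos t)| ≤ K^2/nR := le_trans hlog2 ht2
  have hb3 : |nR*(t^2-c^2)/2| ≤ (C+K)*D*NR/sq := by
    have e : t^2 - c^2 = (c+t)*(t-c) := by ring
    have h6 : |t^2 - c^2| ≤ (D*NR/nR) * ((C+K)/sq) := by
      rw [e, abs_mul]
      apply mul_le_mul hct _ (abs_nonneg _) (by positivity)
      calc |t - c| ≤ |t| + |c| := abs_sub _ _
      _ ≤ K/sq + C/sq := add_le_add ht hc
      _ = (C+K)/sq := by ring
    have e2 : |nR*(t^2-c^2)/2| = nR*|t^2-c^2|/2 := by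
      rw [abs_div, abs_mul, abs_of_nonneg hn0.le]
      norm_num
    rw [e2]
    calc nR*|t^2-c^2|/2 ≤ nR*((D*NR/nR) * ((C+K)/sq))/2 := by
          have h9 := mul_le_mul_of_nonneg_left h6 hn0.le
          linarith
    _ = (C+K)*D*NR/sq/2 := by
          field_simp
    _ ≤ (C+K)*D*NR/sq := by
          have h10 : 0 ≤ (C+K)*D*NR/sq := by positivity
          linarith
  have hb4 : |(NR+1)*c^2/2| ≤ C^2*NR/nR := by
    rw [abs_of_nonneg (by positivity)]
    have h8 : (NR+1)/2 ≤ NR := by linarith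
    calc (NR+1)*c^2/2 = ((NR+1)/2)*c^2 := by ring
    _ ≤ NR*c^2 := mul_le_mul_of_nonneg_right h8 (sq_nonneg c)
    _ ≤ NR*(C^2/nR) := mul_le_mul_of_nonneg_left hcsq (by linarith)
    _ = C^2*NR/nR := by ring
  have hdivN : ∀ x : ℝ, 0 ≤ x → x/nR ≤ x*NR/sq := by
    intro x hx
    calc x/nR ≤ x/sq := div_le_div_of_nonneg_left hx hsq0 hsn
    _ ≤ x*NR/sq := by
        apply (div_le_div_iff_of_pos_right hsq0).mpr
        have := mul_le_mul_of_nonneg_left hN1 hx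
        linarith
  have htri : |mR * Real.log s + Real.log (Real.cos t) + (nR*t^2)/2|
      ≤ |mR*(Real.log s + c^2/2)| + |Real.log (Real.cos t)|
        + |nR*(t^2 - c^2)/2| + |(NR+1)*c^2/2| := by
    rw [hdec]
    calc |mR*(Real.log s + c^2/2) + Real.log (Real.cos t) + nR*(t^2 - c^2)/2 + (NR+1)*c^2/2|
        ≤ |mR*(Real.log s + c^2/2) + Real.log (Real.cos t) + nR*(t^2 - c^2)/2| + |(NR+1)*c^2/2| :=
          abs_add_le _ _
    _ ≤ (|mR*(Real.log s + c^2/2) + Real.log (Real.cos t)| + |nR*(t^2 - c^2)/2|) + |(NR+1)*c^2/2| := by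
          linarith [abs_add_le (mR*(Real.log s + c^2/2) + Real.log (Real.cos t)) (nR*(t^2 - c^2)/2)]
    _ ≤ ((|mR*(Real.log s + c^2/2)| + |Real.log (Real.cos t)|) + |nR*(t^2 - c^2)/2|) + |(NR+1)*c^2/2| := by
          linarith [abs_add_le (mR*(Real.log s + c^2/2)) (Real.log (Real.cos t))]
    _ = _ := by ring
  have hfin1 := hdivN (C^4) (by positivity)
  have hfin2 := hdivN (K^2) (sq_nonneg K)
  have hfin4 : C^2*NR/nR ≤ C^2*NR/sq := div_le_div_of_nonneg_left (by positivity) hsq0 hsn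
  have hsumB : C^4*NR/sq + K^2*NR/sq + (C+K)*D*NR/sq + C^2*NR/sq ≤ B*NR/sq := by
    have e : C^4*NR/sq + K^2*NR/sq + (C+K)*D*NR/sq + C^2*NR/sq
        = ((C+K)*D + C^2 + C^4 + K^2)*(NR/sq) := by ring
    rw [e, show B*NR/sq = B*(NR/sq) by ring]
    exact mul_le_mul_of_nonneg_right (by linarith) (by positivity)
  linarith [htri, hb1, hb2, hb3, hb4, hfin1, hfin2, hfin4]


/-- α̃_{ij} = √n·(arccos(u_i·u_j) − π/2), where · is the standard inner product on ℝⁿ. -/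
noncomputable def alphaTilde (n : ℕ) (φ : ℕ → ℕ → ℝ) (i j : ℕ) : ℝ :=
  Real.sqrt n * (Real.arccos (∑ k : Fin n, sphVec n φ i k * sphVec n φ j k) - Real.pi / 2)

set_option maxHeartbeats 4000000 in
/-- if |α̃_{ij}| ≤ K for all i < j, then
∏_{i<j} sin(φ_{ij})^{n-N-1}·cos(α̃_{ij}/√n) = (1+h)·∏_{i<j} e^{-α̃_{ij}²/2}
with |h| ≤ A·N³/√n. -/
theorem prod_sin_cos_eq_gaussian (K : ℝ) (hK : 0 < K) :
    ∃ (A : ℝ) (n₀ : ℕ), 0 < A ∧ 2 ≤ n₀ ∧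
      ∀ (n N : ℕ), n₀ ≤ n → 2 ≤ N → N ^ 6 ≤ n →
      ∀ φ : ℕ → ℕ → ℝ,
        (∀ a b : ℕ, 1 ≤ a → a < b → b ≤ N → φ a b ∈ Set.Icc 0 Real.pi) →
        (∀ i j : ℕ, 1 ≤ i → i < j → j ≤ N → |alphaTilde n φ i j| ≤ K) →
        ∃ h : ℝ, |h| ≤ A * (N : ℝ) ^ 3 / Real.sqrt n ∧
          (∏ i ∈ Finset.Icc 1 N, ∏ j ∈ Finset.Icc (i + 1) N,
              Real.sin (φ i j) ^ (n - N - 1) * Real.cos (alphaTilde n φ i j / Real.sqrt n)) =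
          (1 + h) * ∏ i ∈ Finset.Icc 1 N, ∏ j ∈ Finset.Icc (i + 1) N,
              Real.exp (-(alphaTilde n φ i j) ^ 2 / 2) := by
  set C : ℝ := 2*K + 2 with hC_def
  set D : ℝ := 2*C^3 + C^2 + K^2 with hD_def
  set B : ℝ := (C+K)*D + C^2 + C^4 + K^2 + 1 with hB_def
  clear_value C D B
  have hC2 : 2 ≤ C := by simp only [hC_def]; linarith
  have hC0 : 0 < C := by linarith
  have hC6 : (64:ℝ) ≤ C^6 := by
    calc (64:ℝ) = 2^6 := by norm_num
    _ ≤ C^6 := pow_le_pow_left₀ (by norm_num) hC2 6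
  have hC46 : C^4 ≤ 64*C^6 := by
    nlinarith [mul_nonneg (pow_pos hC0 4).le (by nlinarith : (0:ℝ) ≤ 64*C^2 - 1)]
  have hD0 : 0 < D := by nlinarith
  have hB0 : 0 < B := by nlinarith
  refine ⟨B * Real.exp B, ⌈64*C^6 + K^2⌉₊ + 2, mul_pos hB0 (Real.exp_pos B), Nat.le_add_left 2 _, ?_⟩
  intro n N hn hN hN6 φ hφ hα
  -- numeric facts
  have hnR : (64*C^6 + K^2 : ℝ) ≤ n := by
    calc (64*C^6 + K^2 : ℝ) ≤ (⌈64*C^6 + K^2⌉₊ : ℝ) := Nat.le_ceil _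
    _ ≤ ((⌈64*C^6 + K^2⌉₊ + 2 : ℕ) : ℝ) := by push_cast; linarith
    _ ≤ (n : ℝ) := by exact_mod_cast hn
  have hn1 : (1:ℝ) ≤ n := by nlinarith [sq_nonneg K]
  have hn0 : (0:ℝ) < n := by linarith
  have hsq0 : 0 < Real.sqrt n := Real.sqrt_pos.mpr hn0
  have hsqsq : Real.sqrt n ^ 2 = n := Real.sq_sqrt hn0.le
  have hsq1 : 1 ≤ Real.sqrt n := by nlinarith
  have hN2 : (2:ℝ) ≤ (N:ℝ) := by exact_mod_cast hN
  have hNR6 : ((N:ℝ))^6 ≤ n := by exact_mod_cast hN6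
  have hN3sq : (N:ℝ)^3 ≤ Real.sqrt n := by
    have h := Real.sqrt_le_sqrt hNR6
    rwa [show ((N:ℝ)^6) = ((N:ℝ)^3)^2 by ring, Real.sqrt_sq (by positivity)] at h
  have hNsq : (N:ℝ) ≤ Real.sqrt n := by
    refine le_trans ?_ hN3sq
    nlinarith [mul_nonneg (mul_nonneg (by linarith : (0:ℝ) ≤ (N:ℝ)) (by linarith : (0:ℝ) ≤ (N:ℝ)-1)) (by linarith : (0:ℝ) ≤ (N:ℝ)+1)]
  have hNn : (N:ℝ) ≤ n := by nlinarith
  have hNnat : N ≤ n := by exact_mod_cast hNn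
  have hN1n : N + 1 ≤ n := by
    have : ((N:ℝ)) + 1 ≤ n := by nlinarith
    exact_mod_cast this
  have hmcast : ((n - N - 1 : ℕ) : ℝ) = (n:ℝ) - N - 1 := by
    have he : n - N - 1 = n - (N+1) := by omega
    rw [he, Nat.cast_sub hN1n]
    push_cast; ring
  have hCsqn : C^2 ≤ Real.sqrt n := by
    by_contra hcon
    push_neg at hcon
    have h1 : Real.sqrt n * Real.sqrt n < C^2 * C^2 := mul_lt_mul'' hcon hcon hsq0.le hsq0.le
    have h2 : Real.sqrt n * Real.sqrt n = n := Real.mul_self_sqrt hn0.le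
    have h3 : C^2*C^2 = C^4 := by ring
    linarith [sq_nonneg K]
  have hEps' : 4*C^2*(N:ℝ) ≤ Real.sqrt n := by
    have h3 : (4*C^2*(N:ℝ))^3 ≤ (Real.sqrt n)^3 := by
      have hs3 : (Real.sqrt n)^3 = n * Real.sqrt n := by
        rw [pow_succ, hsqsq]
      rw [hs3]
      calc (4*C^2*(N:ℝ))^3 = (64*C^6) * (N:ℝ)^3 := by ring
      _ ≤ n * Real.sqrt n := by
          apply mul_le_mul (by nlinarith) hN3sq (by positivity) hn0.le
    exact (pow_le_pow_iff_left₀ (by positivity) hsq0.le (by norm_num)).mp h3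
  have hKsq : K^2 ≤ n := by linarith [hC6]
  have hC26 : 2*C^2 ≤ 64*C^6 := by
    nlinarith [mul_nonneg (sq_nonneg C) (by nlinarith [sq_nonneg (C^2)] : (0:ℝ) ≤ 64*C^4 - 2)]
  have h2n' : 2*C^2 ≤ (n:ℝ) := by linarith [sq_nonneg K]
  have hCn2 : C^2/n ≤ 1/2 := by
    rw [div_le_iff₀ hn0]
    linarith
  -- sin bounds
  have hsin01 : ∀ a b : ℕ, 1 ≤ a → a < b → b ≤ N → 0 ≤ Real.sin (φ a b) ∧ Real.sin (φ a b) ≤ 1 :=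
    fun a b ha hab hbN => ⟨Real.sin_nonneg_of_nonneg_of_le_pi (hφ a b ha hab hbN).1 (hφ a b ha hab hbN).2,
      Real.sin_le_one _⟩
  -- basic per-pair facts about the inner product
  have pairBasic : ∀ i j : ℕ, 1 ≤ i → i < j → j ≤ N →
      (|∑ k : Fin n, sphVec n φ i k * sphVec n φ j k| ≤ K/Real.sqrt n ∧
       ∑ k : Fin n, sphVec n φ i k * sphVec n φ j k = -Real.sin (alphaTilde n φ i j / Real.sqrt n)) := by
    intro i j h1 hij hjN
    set ip := ∑ k : Fin n, sphVec n φ i k * sphVec n φ j k with hip_def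
    have hin : i ≤ n := le_trans (le_trans hij.le hjN) hNnat
    have hjn : j ≤ n := le_trans hjN hNnat
    have hipsq : ip^2 ≤ 1 := by
      have cs := Finset.sum_mul_sq_le_sq_mul_sq Finset.univ (sphVec n φ i) (sphVec n φ j)
      have e1 : ∑ k : Fin n, sphVec n φ i k ^ 2 = ∑ k : Fin n, sphVec n φ i k * sphVec n φ i k := by
        apply Finset.sum_congr rfl; intro k _; ring
      have e2 : ∑ k : Fin n, sphVec n φ j k ^ 2 = ∑ k : Fin n, sphVec n φ j k * sphVec n φ j k := by
        apply Finset.sum_congr rfl; intro k _; ring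
      rw [e1, e2, ip_self n i h1 hin φ, ip_self n j (le_trans h1 hij.le) hjn φ] at cs
      simpa using cs
    have hip1 := abs_le.mp ((sq_le_one_iff_abs_le_one ip).mp hipsq)
    have ht_eq : alphaTilde n φ i j / Real.sqrt n = Real.arccos ip - Real.pi/2 := by
      unfold alphaTilde
      rw [← hip_def, mul_div_cancel_left₀ _ (ne_of_gt hsq0)]
    have hcos : Real.cos (Real.arccos ip) = ip := Real.cos_arccos hip1.1 hip1.2
    have h2 : ip = -Real.sin (alphaTilde n φ i j / Real.sqrt n) := by
      rw [ht_eq, Real.sin_sub_pi_div_two, hcos, neg_neg]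
    refine ⟨?_, h2⟩
    rw [h2, abs_neg]
    calc |Real.sin (alphaTilde n φ i j / Real.sqrt n)| ≤ |alphaTilde n φ i j / Real.sqrt n| :=
        Real.abs_sin_le_abs
    _ = |alphaTilde n φ i j| / Real.sqrt n := by rw [abs_div, abs_of_pos hsq0]
    _ ≤ K / Real.sqrt n := (div_le_div_iff_of_pos_right hsq0).mpr (hα i j h1 hij hjN)
  -- more global facts
  have hmss : Real.sqrt n * Real.sqrt n = (n:ℝ) := Real.mul_self_sqrt hn0.le
  have hsn : Real.sqrt n ≤ n := by
    have h := mul_le_mul_of_nonneg_left hsq1 hsq0.le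
    rw [mul_one, hmss] at h
    exact h
  have hKsqrt : K ≤ Real.sqrt n := by
    by_contra hcon; push_neg at hcon
    nlinarith [mul_lt_mul'' hcon hcon hsq0.le hsq0.le, hsqsq]
  have hK1 : K/Real.sqrt n ≤ 1 := by
    rw [div_le_one hsq0]; exact hKsqrt
  have htK : ∀ i j : ℕ, 1 ≤ i → i < j → j ≤ N →
      |alphaTilde n φ i j / Real.sqrt n| ≤ K/Real.sqrt n := by
    intro i j h1 h2 h3
    rw [abs_div, abs_of_pos hsq0]
    exact (div_le_div_iff_of_pos_right hsq0).mpr (hα i j h1 h2 h3)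
  have hCdivsq : (C/Real.sqrt n)*(C/Real.sqrt n) = C^2/(n:ℝ) := by
    rw [div_mul_div_comm, Real.mul_self_sqrt hn0.le]; ring
  have hQsmall : 2*(N:ℝ)*C^2/n ≤ 1/2 := by
    rw [div_le_iff₀ hn0]
    linarith [hEps', hsn]
  have habssq : ∀ x : ℝ, |x| ≤ C/Real.sqrt n → x^2 ≤ C^2/n := by
    intro x hx
    calc x^2 = |x|^2 := (sq_abs x).symm
    _ ≤ (C/Real.sqrt n)^2 := pow_le_pow_left₀ (abs_nonneg x) hx 2
    _ = C^2/n := by rw [div_pow, hsqsq]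
  -- the main induction: bounds on cos φ_ij and on cos φ_ij + t_ij
  have pairFacts : ∀ i : ℕ, ∀ j : ℕ, 1 ≤ i → i < j → j ≤ N →
      |Real.cos (φ i j)| ≤ C/Real.sqrt n ∧
      |Real.cos (φ i j) + alphaTilde n φ i j / Real.sqrt n| ≤ D*(N:ℝ)/n := by
    intro i
    induction i using Nat.strong_induction_on with
    | _ i IH =>
    intro j h1 hij hjN
    obtain ⟨hipK, hipsin⟩ := pairBasic i j h1 hij hjN
    have hin : i ≤ n := le_trans (le_trans hij.le hjN) hNnat
    have hiN : i ≤ N := le_trans hij.le hjN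
    have hform := ip_eq n φ h1 hij hin
    set SG := ∑ k ∈ Finset.range (i-1), Real.cos (φ (k+1) i) * Real.cos (φ (k+1) j) *
        ∏ m ∈ Finset.Icc 1 k, (Real.sin (φ m i) * Real.sin (φ m j)) with hSG_def
    set Q := ∏ m ∈ Finset.Icc 1 (i-1), (Real.sin (φ m i) * Real.sin (φ m j)) with hQ_def
    set t := alphaTilde n φ i j / Real.sqrt n with ht_def
    have ht : |t| ≤ K/Real.sqrt n := htK i j h1 hij hjN
    have hfac01 : ∀ m ∈ Finset.Icc 1 (i-1), 0 ≤ Real.sin (φ m i) * Real.sin (φ m j) ∧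
        Real.sin (φ m i) * Real.sin (φ m j) ≤ 1 := by
      intro m hm
      rw [Finset.mem_Icc] at hm
      have hmi := hsin01 m i hm.1 (by omega) hiN
      have hmj := hsin01 m j hm.1 (by omega) hjN
      exact ⟨mul_nonneg hmi.1 hmj.1, mul_le_one₀ hmi.2 hmj.1 hmj.2⟩
    have hQ0 : 0 ≤ Q := Finset.prod_nonneg (fun m hm => (hfac01 m hm).1)
    have hQ1 : Q ≤ 1 := Finset.prod_le_one (fun m hm => (hfac01 m hm).1) (fun m hm => (hfac01 m hm).2)
    -- sigma bound
    have hSGB : |SG| ≤ (N:ℝ)*(C^2/n) := by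
      refine le_trans (Finset.abs_sum_le_sum_abs _ _) ?_
      have hterm : ∀ k ∈ Finset.range (i-1),
          |Real.cos (φ (k+1) i) * Real.cos (φ (k+1) j) *
            ∏ m ∈ Finset.Icc 1 k, (Real.sin (φ m i) * Real.sin (φ m j))| ≤ C^2/n := by
        intro k hk
        rw [Finset.mem_range] at hk
        have hc1 := (IH (k+1) (by omega) i (by omega) (by omega) hiN).1
        have hc2 := (IH (k+1) (by omega) j (by omega) (by omega) hjN).1
        have hP01 : ∀ m ∈ Finset.Icc 1 k, (0 ≤ Real.sin (φ m i) * Real.sin (φ m j) ∧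
            Real.sin (φ m i) * Real.sin (φ m j) ≤ 1) := by
          intro m hm
          rw [Finset.mem_Icc] at hm
          have hmi := hsin01 m i hm.1 (by omega) hiN
          have hmj := hsin01 m j hm.1 (by omega) hjN
          exact ⟨mul_nonneg hmi.1 hmj.1, mul_le_one₀ hmi.2 hmj.1 hmj.2⟩
        have hP0 : 0 ≤ ∏ m ∈ Finset.Icc 1 k, (Real.sin (φ m i) * Real.sin (φ m j)) :=
          Finset.prod_nonneg (fun m hm => (hP01 m hm).1)
        have hP1 : (∏ m ∈ Finset.Icc 1 k, (Real.sin (φ m i) * Real.sin (φ m j))) ≤ 1 :=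
          Finset.prod_le_one (fun m hm => (hP01 m hm).1) (fun m hm => (hP01 m hm).2)
        rw [abs_mul, abs_mul]
        calc |Real.cos (φ (k+1) i)| * |Real.cos (φ (k+1) j)| *
              |∏ m ∈ Finset.Icc 1 k, (Real.sin (φ m i) * Real.sin (φ m j))|
            ≤ (C/Real.sqrt n) * (C/Real.sqrt n) * 1 := by
              apply mul_le_mul (mul_le_mul hc1 hc2 (abs_nonneg _) (by positivity))
                (by rw [abs_of_nonneg hP0]; exact hP1) (abs_nonneg _) (by positivity)
        _ = C^2/n := by rw [mul_one, hCdivsq]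
      refine le_trans (Finset.sum_le_card_nsmul _ _ (C^2/n) hterm) ?_
      rw [Finset.card_range, nsmul_eq_mul]
      apply mul_le_mul_of_nonneg_right _ (by positivity)
      calc ((i-1 : ℕ):ℝ) ≤ (i:ℝ) := by
            have : (i-1 : ℕ) ≤ i := by omega
            exact_mod_cast this
      _ ≤ (N:ℝ) := by exact_mod_cast hiN
    -- Q lower bound
    have hQlb : 1 - 2*(N:ℝ)*C^2/n ≤ Q := by
      have hlb := aux_prod_lb (Finset.Icc 1 (i-1)) (fun m => Real.sin (φ m i) * Real.sin (φ m j))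
        (fun m hm => (hfac01 m hm).1) (fun m hm => (hfac01 m hm).2)
      have hsum : ∑ m ∈ Finset.Icc 1 (i-1), (1 - Real.sin (φ m i) * Real.sin (φ m j))
          ≤ 2*(N:ℝ)*C^2/n := by
        have hterm : ∀ m ∈ Finset.Icc 1 (i-1), 1 - Real.sin (φ m i) * Real.sin (φ m j) ≤ 2*(C^2/n) := by
          intro m hm
          rw [Finset.mem_Icc] at hm
          have hmi := hsin01 m i hm.1 (by omega) hiN
          have hmj := hsin01 m j hm.1 (by omega) hjN
          have hci := habssq _ (IH m (by omega) i hm.1 (by omega) hiN).1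
          have hcj := habssq _ (IH m (by omega) j hm.1 (by omega) hjN).1
          have hsi := Real.sin_sq (φ m i)
          have hsj := Real.sin_sq (φ m j)
          linarith [mul_nonneg (by linarith [hmi.2] : (0:ℝ) ≤ 1 - Real.sin (φ m i))
              (by linarith [hmj.2] : (0:ℝ) ≤ 1 - Real.sin (φ m j)),
            mul_nonneg hmi.1 (by linarith [hmi.2] : (0:ℝ) ≤ 1 - Real.sin (φ m i)),
            mul_nonneg hmj.1 (by linarith [hmj.2] : (0:ℝ) ≤ 1 - Real.sin (φ m j)),
            hci, hcj, hsi, hsj]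
        refine le_trans (Finset.sum_le_card_nsmul _ _ (2*(C^2/n)) hterm) ?_
        rw [Nat.card_Icc, nsmul_eq_mul]
        have hcard : ((i - 1 + 1 - 1 : ℕ):ℝ) ≤ (N:ℝ) := by
          have : (i - 1 + 1 - 1 : ℕ) ≤ N := by omega
          exact_mod_cast this
        calc ((i - 1 + 1 - 1 : ℕ):ℝ) * (2*(C^2/n)) ≤ (N:ℝ) * (2*(C^2/n)) :=
              mul_le_mul_of_nonneg_right hcard (by positivity)
        _ = 2*(N:ℝ)*C^2/n := by ring
      linarith
    have hQhalf : 1/2 ≤ Q := by linarith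
    -- part 1
    have hcosQ : Real.cos (φ i j) * Q = (∑ k : Fin n, sphVec n φ i k * sphVec n φ j k) - SG := by
      rw [hform]; ring
    have habs1 : |Real.cos (φ i j)| * Q ≤ K/Real.sqrt n + (N:ℝ)*(C^2/n) := by
      rw [← abs_of_nonneg hQ0, ← abs_mul, hcosQ]
      exact le_trans (abs_sub _ _) (add_le_add hipK hSGB)
    have h3 : 2*((N:ℝ)*(C^2/n)) ≤ 1/(2*Real.sqrt n) := by
      rw [show 2*((N:ℝ)*(C^2/n)) = (2*(N:ℝ)*C^2)/(n:ℝ) by ring,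
        div_le_div_iff₀ hn0 (by positivity)]
      have h := mul_le_mul_of_nonneg_right hEps' hsq0.le
      rw [hmss] at h
      linarith
    have hpart1 : |Real.cos (φ i j)| ≤ C/Real.sqrt n := by
      have h2 : |Real.cos (φ i j)| ≤ 2*(K/Real.sqrt n) + 2*((N:ℝ)*(C^2/n)) := by
        have hh := mul_le_mul_of_nonneg_left hQhalf (abs_nonneg (Real.cos (φ i j)))
        linarith [habs1]
      have h4 : 2*(K/Real.sqrt n) + 1/(2*Real.sqrt n) ≤ C/Real.sqrt n := by
        rw [show 2*(K/Real.sqrt n) + 1/(2*Real.sqrt n) = (2*K + 1/2)/Real.sqrt n by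
          field_simp]
        exact (div_le_div_iff_of_pos_right hsq0).mpr (by rw [hC_def]; linarith)
      linarith
    refine ⟨hpart1, ?_⟩
    -- part 2
    have hsint : |Real.sin t - t| ≤ K^2/n := by
      have ht1 : |t| ≤ 1 := le_trans ht hK1
      refine le_trans (aux_sin_approx ht1) ?_
      calc t^2 = |t|^2 := (sq_abs t).symm
      _ ≤ (K/Real.sqrt n)^2 := pow_le_pow_left₀ (abs_nonneg t) ht 2
      _ = K^2/n := by rw [div_pow, hsqsq]
    have hEq : Real.cos (φ i j) + t = (Real.cos (φ i j)*(1-Q) - SG) + (t - Real.sin t) := by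
      have h5 : SG + Real.cos (φ i j) * Q = -Real.sin t := by rw [← hform]; exact hipsin
      linear_combination h5
    have hcC : |Real.cos (φ i j)| ≤ C := le_trans hpart1 (by
      rw [div_le_iff₀ hsq0]
      have h := mul_le_mul_of_nonneg_left hsq1 hC0.le
      linarith)
    have h1mQ : |Real.cos (φ i j)*(1-Q)| ≤ C*(2*(N:ℝ)*C^2/n) := by
      rw [abs_mul]
      apply mul_le_mul hcC _ (abs_nonneg _) hC0.le
      rw [abs_of_nonneg (by linarith : (0:ℝ) ≤ 1 - Q)]
      linarith
    have htri : |Real.cos (φ i j) + t| ≤ |Real.cos (φ i j)*(1-Q)| + |SG| + |Real.sin t - t| := by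
      rw [hEq]
      calc |(Real.cos (φ i j)*(1-Q) - SG) + (t - Real.sin t)|
          ≤ |Real.cos (φ i j)*(1-Q) - SG| + |t - Real.sin t| := abs_add_le _ _
      _ ≤ (|Real.cos (φ i j)*(1-Q)| + |SG|) + |t - Real.sin t| := by
            linarith [abs_sub (Real.cos (φ i j)*(1-Q)) SG]
      _ = |Real.cos (φ i j)*(1-Q)| + |SG| + |Real.sin t - t| := by rw [abs_sub_comm]
    have hfinal : C*(2*(N:ℝ)*C^2/n) + (N:ℝ)*(C^2/n) + K^2/n ≤ D*(N:ℝ)/n := by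
      have e1 : C*(2*(N:ℝ)*C^2/n) + (N:ℝ)*(C^2/n) + K^2/n
          = (2*C^3*(N:ℝ) + C^2*(N:ℝ) + K^2)/n := by ring
      have e2 : D*(N:ℝ)/n = (2*C^3*(N:ℝ) + C^2*(N:ℝ) + K^2*(N:ℝ))/n := by rw [hD_def]; ring
      rw [e1, e2]
      apply (div_le_div_iff_of_pos_right hn0).mpr
      linarith [mul_le_mul_of_nonneg_left (by linarith : (1:ℝ) ≤ (N:ℝ)) (sq_nonneg K)]
    linarith
  -- positivity of sin and cos t, and t² bound
  have pairT : ∀ i j : ℕ, 1 ≤ i → i < j → j ≤ N →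
      (alphaTilde n φ i j / Real.sqrt n)^2 ≤ K^2/n := by
    intro i j h1 hij hjN
    calc (alphaTilde n φ i j / Real.sqrt n)^2 = |alphaTilde n φ i j / Real.sqrt n|^2 :=
          (sq_abs _).symm
    _ ≤ (K/Real.sqrt n)^2 := pow_le_pow_left₀ (abs_nonneg _) (htK i j h1 hij hjN) 2
    _ = K^2/n := by rw [div_pow, hsqsq]
  have hK2n1 : K^2/(n:ℝ) ≤ 1 := (div_le_one hn0).mpr hKsq
  have pairCos : ∀ i j : ℕ, 1 ≤ i → i < j → j ≤ N →
      0 < Real.cos (alphaTilde n φ i j / Real.sqrt n) := by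
    intro i j h1 hij hjN
    have h2 := pairT i j h1 hij hjN
    have h3 := Real.one_sub_sq_div_two_le_cos (x := alphaTilde n φ i j / Real.sqrt n)
    linarith
  have pairSin : ∀ i j : ℕ, 1 ≤ i → i < j → j ≤ N → 0 < Real.sin (φ i j) := by
    intro i j h1 hij hjN
    have hc2 := habssq _ (pairFacts i j h1 hij hjN).1
    have hs2 : Real.sin (φ i j)^2 = 1 - Real.cos (φ i j)^2 := Real.sin_sq _
    have hpos : 0 < Real.sin (φ i j)^2 := by linarith [hCn2]
    rcases (hsin01 i j h1 hij hjN).1.lt_or_eq with h | h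
    · exact h
    · exfalso; rw [← h] at hpos; simp at hpos
  -- per-pair equation with exponential
  set E : ℕ → ℕ → ℝ := fun i j => ((n - N - 1 : ℕ):ℝ) * Real.log (Real.sin (φ i j))
      + Real.log (Real.cos (alphaTilde n φ i j / Real.sqrt n)) with hE_def
  have pairEq : ∀ i j : ℕ, 1 ≤ i → i < j → j ≤ N →
      Real.sin (φ i j) ^ (n - N - 1) * Real.cos (alphaTilde n φ i j / Real.sqrt n)
        = Real.exp (E i j) := by
    intro i j h1 hij hjN
    have hs := pairSin i j h1 hij hjN
    have hc := pairCos i j h1 hij hjN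
    simp only [hE_def]
    rw [Real.exp_add, Real.exp_nat_mul, Real.exp_log hs, Real.exp_log hc]
  have pairBound : ∀ i j : ℕ, 1 ≤ i → i < j → j ≤ N →
      |E i j + (alphaTilde n φ i j)^2/2| ≤ B*(N:ℝ)/Real.sqrt n := by
    intro i j h1 hij hjN
    obtain ⟨hc, hct⟩ := pairFacts i j h1 hij hjN
    have ha2 : (alphaTilde n φ i j)^2 = (n:ℝ) * (alphaTilde n φ i j / Real.sqrt n)^2 := by
      rw [div_pow, hsqsq]
      field_simp
    have key := aux_pairBound (c := Real.cos (φ i j)) (t := alphaTilde n φ i j / Real.sqrt n)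
      (s := Real.sin (φ i j)) (mR := ((n - N - 1 : ℕ):ℝ)) (nR := (n:ℝ)) (NR := (N:ℝ))
      (sq := Real.sqrt n) (C := C) (K := K) (D := D) (B := B)
      hn0 hsqsq hsq0 hsn (Real.sin_sq _) (pairSin i j h1 hij hjN)
      hc (le_trans (habssq _ hc) hCn2)
      (htK i j h1 hij hjN) (le_trans (pairT i j h1 hij hjN) hK2n1)
      hct hmcast (Nat.cast_nonneg _) (by linarith)
      hC0 hK (by linarith) (by rw [hB_def])
    have e : E i j + (alphaTilde n φ i j)^2/2
        = ((n - N - 1 : ℕ):ℝ) * Real.log (Real.sin (φ i j))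
          + Real.log (Real.cos (alphaTilde n φ i j / Real.sqrt n))
          + ((n:ℝ)*(alphaTilde n φ i j / Real.sqrt n)^2)/2 := by
      simp only [hE_def]
      rw [ha2]
    rw [e]
    exact key
  -- assembly
  have hLHS : (∏ i ∈ Finset.Icc 1 N, ∏ j ∈ Finset.Icc (i + 1) N,
        Real.sin (φ i j) ^ (n - N - 1) * Real.cos (alphaTilde n φ i j / Real.sqrt n))
      = Real.exp (∑ i ∈ Finset.Icc 1 N, ∑ j ∈ Finset.Icc (i+1) N, E i j) := by
    rw [Real.exp_sum]
    apply Finset.prod_congr rfl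
    intro i hi
    rw [Real.exp_sum]
    apply Finset.prod_congr rfl
    intro j hj
    rw [Finset.mem_Icc] at hi hj
    exact pairEq i j hi.1 (by omega) hj.2
  have hRHS : (∏ i ∈ Finset.Icc 1 N, ∏ j ∈ Finset.Icc (i + 1) N,
        Real.exp (-(alphaTilde n φ i j)^2/2))
      = Real.exp (-(∑ i ∈ Finset.Icc 1 N, ∑ j ∈ Finset.Icc (i+1) N, (alphaTilde n φ i j)^2/2)) := by
    rw [show -(∑ i ∈ Finset.Icc 1 N, ∑ j ∈ Finset.Icc (i+1) N, (alphaTilde n φ i j)^2/2)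
        = ∑ i ∈ Finset.Icc 1 N, ∑ j ∈ Finset.Icc (i+1) N, (-(alphaTilde n φ i j)^2/2) by
      simp [Finset.sum_neg_distrib, neg_div]]
    rw [Real.exp_sum]
    apply Finset.prod_congr rfl
    intro i hi
    rw [Real.exp_sum]
  set X : ℝ := ∑ i ∈ Finset.Icc 1 N, ∑ j ∈ Finset.Icc (i+1) N,
      (E i j + (alphaTilde n φ i j)^2/2) with hX_def
  have hXsum : X = (∑ i ∈ Finset.Icc 1 N, ∑ j ∈ Finset.Icc (i+1) N, E i j)
      + (∑ i ∈ Finset.Icc 1 N, ∑ j ∈ Finset.Icc (i+1) N, (alphaTilde n φ i j)^2/2) := by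
    rw [hX_def, ← Finset.sum_add_distrib]
    apply Finset.sum_congr rfl
    intro i _
    rw [← Finset.sum_add_distrib]
  have hBN0 : (0:ℝ) ≤ B*(N:ℝ)/Real.sqrt n :=
    div_nonneg (mul_nonneg hB0.le (Nat.cast_nonneg N)) hsq0.le
  have hXb : |X| ≤ B*(N:ℝ)^3/Real.sqrt n := by
    calc |X| ≤ ∑ i ∈ Finset.Icc 1 N, |∑ j ∈ Finset.Icc (i+1) N,
          (E i j + (alphaTilde n φ i j)^2/2)| := Finset.abs_sum_le_sum_abs _ _
    _ ≤ ∑ i ∈ Finset.Icc 1 N, (N:ℝ)*(B*(N:ℝ)/Real.sqrt n) := by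
        apply Finset.sum_le_sum
        intro i hi
        rw [Finset.mem_Icc] at hi
        calc |∑ j ∈ Finset.Icc (i+1) N, (E i j + (alphaTilde n φ i j)^2/2)|
            ≤ ∑ j ∈ Finset.Icc (i+1) N, |E i j + (alphaTilde n φ i j)^2/2| :=
              Finset.abs_sum_le_sum_abs _ _
        _ ≤ (Finset.Icc (i+1) N).card • (B*(N:ℝ)/Real.sqrt n) := by
              apply Finset.sum_le_card_nsmul
              intro j hj
              rw [Finset.mem_Icc] at hj
              exact pairBound i j hi.1 (by omega) hj.2
        _ ≤ (N:ℝ)*(B*(N:ℝ)/Real.sqrt n) := by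
              rw [nsmul_eq_mul]
              apply mul_le_mul_of_nonneg_right _ hBN0
              rw [Nat.card_Icc]
              have hcard : (N + 1 - (i+1) : ℕ) ≤ N := by omega
              exact_mod_cast hcard
    _ = (N:ℝ)*((N:ℝ)*(B*(N:ℝ)/Real.sqrt n)) := by
        rw [Finset.sum_const, Nat.card_Icc, nsmul_eq_mul]
        norm_num
    _ = B*(N:ℝ)^3/Real.sqrt n := by ring
  have hX1 : |X| ≤ B := by
    refine le_trans hXb ?_
    calc B*(N:ℝ)^3/Real.sqrt n ≤ B*Real.sqrt n/Real.sqrt n :=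
          (div_le_div_iff_of_pos_right hsq0).mpr (mul_le_mul_of_nonneg_left hN3sq hB0.le)
    _ = B := by field_simp
  refine ⟨Real.exp X - 1, ?_, ?_⟩
  · calc |Real.exp X - 1| ≤ |X| * Real.exp |X| := aux_exp_sub_one X
    _ ≤ (B*(N:ℝ)^3/Real.sqrt n) * Real.exp B := by
        apply mul_le_mul hXb (Real.exp_le_exp.mpr hX1) (Real.exp_pos _).le
        exact div_nonneg (mul_nonneg hB0.le (by positivity)) hsq0.le
    _ = B*Real.exp B * (N:ℝ)^3/Real.sqrt n := by ring
  · rw [hLHS, hRHS, show (1:ℝ) + (Real.exp X - 1) = Real.exp X by ring, ← Real.exp_add]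
    congr 1
    rw [hXsum]
    ring
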